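/- Let p ∈ (0,1) and let μ₁, μ₂ be Borel probability measures on ℝ such that the identity function is integrable with respect to both. Set t = VaR_p(μ₁), and assume the CDFs satisfy F_{μ₁}(r) ≥ F_{μ₂}(r) for all r ∈ (-∞, t]. Then CVaR_p(μ₁) ≤ CVaR_p(μ₂). -/

import Mathlib

open MeasureTheory Set Filter Topology ProbabilityTheory

/-- The cumulative distribution function of a Borel measure on ℝ:
`F_μ(r) = μ((-∞, r])`. -/
noncomputable def mcdf (μ : Measure ℝ) (r : ℝ) : ℝ := (μ (Iic r)).toReal

lemma mcdf_eq_cdf (μ : Measure ℝ) [IsProbabilityMeasure μ] (r : ℝ) :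
    mcdf μ r = cdf μ r := (cdf_eq_real μ r).symm

lemma mcdf_nonneg (μ : Measure ℝ) (r : ℝ) : 0 ≤ mcdf μ r := ENNReal.toReal_nonneg

lemma mcdf_mono (μ : Measure ℝ) [IsProbabilityMeasure μ] : Monotone (mcdf μ) := by
  intro a b hab
  exact ENNReal.toReal_mono (measure_ne_top μ _) (measure_mono (Iic_subset_Iic.2 hab))

lemma mcdf_ofReal (μ : Measure ℝ) [IsProbabilityMeasure μ] (r : ℝ) :
    ENNReal.ofReal (mcdf μ r) = μ (Iic r) :=
  ENNReal.ofReal_toReal (measure_ne_top μ _)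

/-- layer cake: `∫_{(-∞,v)} (v-x) dμ = ∫_{(-∞,v)} μ(Iic y) dy` (lintegral form). -/
lemma key_lintegral (μ : Measure ℝ) [IsProbabilityMeasure μ] (v : ℝ) :
    ∫⁻ x in Iio v, ENNReal.ofReal (v - x) ∂μ = ∫⁻ y in Iio v, μ (Iic y) := by
  have h1 : ∫⁻ x in Iio v, ENNReal.ofReal (v - x) ∂μ
      = ∫⁻ t in Ioi (0:ℝ), (μ.restrict (Iio v)) {a | t ≤ v - a} := by
    refine lintegral_eq_lintegral_meas_le _ ?_ ?_
    · exact (ae_restrict_mem measurableSet_Iio).mono fun x hx => sub_nonneg.2 hx.le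
    · exact (measurable_const.sub measurable_id).aemeasurable
  have h2 : ∀ t ∈ Ioi (0:ℝ), (μ.restrict (Iio v)) {a | t ≤ v - a} = μ (Iic (v - t)) := by
    intro t ht
    have hset : {a : ℝ | t ≤ v - a} = Iic (v - t) := by
      ext a; simp [Set.mem_Iic, le_sub_comm]
    rw [hset, Measure.restrict_apply measurableSet_Iic]
    congr 1
    refine inter_eq_self_of_subset_left (fun a (ha : a ≤ v - t) => ?_)
    exact lt_of_le_of_lt ha (by linarith [mem_Ioi.mp ht])
  rw [h1, setLIntegral_congr_fun_ae measurableSet_Ioi (ae_of_all _ h2)]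
  have hmp : MeasurePreserving (fun t : ℝ => v - t) volume volume :=
    Measure.measurePreserving_sub_left volume v
  have hemb : MeasurableEmbedding (fun t : ℝ => v - t) :=
    (MeasurableEquiv.subLeft v).measurableEmbedding
  have hpre : (fun t : ℝ => v - t) ⁻¹' (Iio v) = Ioi 0 := by
    ext t; simp [sub_lt_iff_lt_add]
  calc ∫⁻ t in Ioi (0:ℝ), μ (Iic (v - t))
      = ∫⁻ t in (fun t : ℝ => v - t) ⁻¹' (Iio v), μ (Iic (v - t)) := by rw [hpre]
    _ = ∫⁻ y in Iio v, μ (Iic y) :=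
        hmp.setLIntegral_comp_preimage_emb hemb (fun y => μ (Iic y)) (Iio v)

lemma key_fin (μ : Measure ℝ) [IsProbabilityMeasure μ]
    (hint : Integrable (fun x : ℝ => x) μ) (v : ℝ) :
    ∫⁻ x in Iio v, ENNReal.ofReal (v - x) ∂μ < ⊤ := by
  have h : Integrable (fun x : ℝ => v - x) μ := (integrable_const v).sub hint
  have hb : ∫⁻ x in Iio v, ENNReal.ofReal (v - x) ∂μ ≤ ∫⁻ x, ‖v - x‖₊ ∂μ := by
    refine le_trans (lintegral_mono fun x => ?_) (setLIntegral_le_lintegral _ _)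
    exact Real.ofReal_le_enorm _
  exact lt_of_le_of_lt hb h.2

lemma mcdf_integrableOn (μ : Measure ℝ) [IsProbabilityMeasure μ]
    (hint : Integrable (fun x : ℝ => x) μ) (v : ℝ) :
    IntegrableOn (mcdf μ) (Iio v) volume := by
  constructor
  · exact ((mcdf_mono μ).measurable).aestronglyMeasurable
  · rw [hasFiniteIntegral_iff_norm]
    have : ∀ y : ℝ, ENNReal.ofReal ‖mcdf μ y‖ = μ (Iic y) := fun y => by
      rw [Real.norm_of_nonneg (mcdf_nonneg μ y), mcdf_ofReal]
    simp_rw [this]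
    rw [← key_lintegral μ v]
    exact key_fin μ hint v

lemma real_key (μ : Measure ℝ) [IsProbabilityMeasure μ]
    (hint : Integrable (fun x : ℝ => x) μ) (v : ℝ) :
    ∫ x in Iio v, (v - x) ∂μ = ∫ y in Iio v, mcdf μ y := by
  rw [integral_eq_lintegral_of_nonneg_ae
      ((ae_restrict_mem measurableSet_Iio).mono fun x hx => sub_nonneg.2 hx.le)
      ((measurable_const.sub measurable_id).aestronglyMeasurable),
    integral_eq_lintegral_of_nonneg_ae
      (ae_of_all _ fun y => mcdf_nonneg μ y)
      (((mcdf_mono μ).measurable).aestronglyMeasurable)]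
  congr 1
  rw [key_lintegral μ v]
  exact (lintegral_congr fun y => by rw [mcdf_ofReal]).symm

/-- The value-at-risk `VaR_p(μ) = sSup {r | F_μ(r) ≤ p}`. -/
noncomputable def valueAtRisk (p : ℝ) (μ : Measure ℝ) : ℝ :=
  sSup {r : ℝ | mcdf μ r ≤ p}

/-- The conditional value-at-risk: with `v = VaR_p(μ)`,
`CVaR_p(μ) = (1/p)·(∫_{(-∞,v)} x dμ + (p − μ((-∞,v)))·v)`. -/
noncomputable def cvar (p : ℝ) (μ : Measure ℝ) : ℝ :=
  (1 / p) * ((∫ x in Iio (valueAtRisk p μ), x ∂μ) +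
    (p - (μ (Iio (valueAtRisk p μ))).toReal) * valueAtRisk p μ)

lemma cvar_repr (p : ℝ) (hp : 0 < p) (μ : Measure ℝ) [IsProbabilityMeasure μ]
    (hint : Integrable (fun x : ℝ => x) μ) :
    p * cvar p μ = p * valueAtRisk p μ - ∫ y in Iio (valueAtRisk p μ), mcdf μ y := by
  set v := valueAtRisk p μ with hv
  have h0 : ∫ x in Iio v, (v - x) ∂μ
      = v * (μ (Iio v)).toReal - ∫ x in Iio v, x ∂μ := by
    rw [integral_sub (integrable_const v) hint.integrableOn, integral_const,
      measureReal_restrict_apply_univ, measureReal_def, smul_eq_mul]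
    ring
  have h1 := real_key μ hint v
  have h2 : ∫ x in Iio v, x ∂μ
      = v * (μ (Iio v)).toReal - ∫ y in Iio v, mcdf μ y := by linarith
  rw [cvar, ← hv, h2]
  field_simp
  ring

lemma var_lower (p : ℝ) (hp : p ∈ Ioo (0:ℝ) 1) (μ : Measure ℝ) [IsProbabilityMeasure μ]
    {r : ℝ} (hr : r < valueAtRisk p μ) : mcdf μ r ≤ p := by
  have hne : {x : ℝ | mcdf μ x ≤ p}.Nonempty := by
    have h := (tendsto_cdf_atBot (μ := μ)).eventually (eventually_lt_nhds hp.1)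
    obtain ⟨x, hx⟩ := h.exists
    exact ⟨x, by rw [mem_setOf_eq, mcdf_eq_cdf]; exact hx.le⟩
  obtain ⟨r', hr'S, hrr'⟩ := exists_lt_of_lt_csSup hne hr
  exact le_trans (mcdf_mono μ hrr'.le) hr'S

lemma var_bddAbove (p : ℝ) (hp : p ∈ Ioo (0:ℝ) 1) (μ : Measure ℝ) [IsProbabilityMeasure μ] :
    BddAbove {x : ℝ | mcdf μ x ≤ p} := by
  have h := (tendsto_cdf_atTop (μ := μ)).eventually (eventually_gt_nhds hp.2)
  obtain ⟨r₀, hr₀⟩ := h.exists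
  refine ⟨r₀, fun r hr => ?_⟩
  by_contra hc
  push_neg at hc
  have : p < mcdf μ r := lt_of_lt_of_le (by rwa [← mcdf_eq_cdf] at hr₀) (mcdf_mono μ hc.le)
  exact absurd hr (not_le.mpr this)

lemma var_upper (p : ℝ) (hp : p ∈ Ioo (0:ℝ) 1) (μ : Measure ℝ) [IsProbabilityMeasure μ]
    {r : ℝ} (hr : valueAtRisk p μ < r) : p ≤ mcdf μ r := by
  by_contra hc
  push_neg at hc
  have : r ≤ valueAtRisk p μ := le_csSup (var_bddAbove p hp μ) hc.le
  exact absurd hr (not_lt.mpr this)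

lemma G_le_G_var (p : ℝ) (hp : p ∈ Ioo (0:ℝ) 1) (μ : Measure ℝ) [IsProbabilityMeasure μ]
    (hint : Integrable (fun x : ℝ => x) μ) (t : ℝ) :
    p * t - ∫ y in Iio t, mcdf μ y
      ≤ p * valueAtRisk p μ - ∫ y in Iio (valueAtRisk p μ), mcdf μ y := by
  set s := valueAtRisk p μ with hs
  rcases le_total t s with h | h
  · have hsplit : ∫ y in Iio s, mcdf μ y
        = (∫ y in Iio t, mcdf μ y) + ∫ y in Ico t s, mcdf μ y := by
      rw [← setIntegral_union (Iio_disjoint_Ici le_rfl |>.mono_right Ico_subset_Ici_self)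
        measurableSet_Ico ((mcdf_integrableOn μ hint s).mono_set (Iio_subset_Iio h))
        ((mcdf_integrableOn μ hint s).mono_set Ico_subset_Iio_self),
        Iio_union_Ico_eq_Iio h]
    have hub : ∫ y in Ico t s, mcdf μ y ≤ p * s - p * t := by
      have hmono : ∫ y in Ico t s, mcdf μ y ≤ ∫ _ in Ico t s, p :=
        setIntegral_mono_on ((mcdf_integrableOn μ hint s).mono_set Ico_subset_Iio_self)
          (integrableOn_const measure_Ico_lt_top.ne) measurableSet_Ico
          (fun y hy => var_lower p hp μ hy.2)
      have hconst : ∫ _ in Ico t s, p = p * s - p * t := by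
        rw [setIntegral_const, smul_eq_mul, Real.volume_real_Ico, max_eq_left (by linarith)]
        ring
      linarith
    linarith
  · have hsplit : ∫ y in Iio t, mcdf μ y
        = (∫ y in Iio s, mcdf μ y) + ∫ y in Ico s t, mcdf μ y := by
      rw [← setIntegral_union (Iio_disjoint_Ici le_rfl |>.mono_right Ico_subset_Ici_self)
        measurableSet_Ico ((mcdf_integrableOn μ hint t).mono_set (Iio_subset_Iio h))
        ((mcdf_integrableOn μ hint t).mono_set Ico_subset_Iio_self),
        Iio_union_Ico_eq_Iio h]
    have hlb : p * t - p * s ≤ ∫ y in Ico s t, mcdf μ y := by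
      rw [integral_Ico_eq_integral_Ioo]
      have hmono : ∫ _ in Ioo s t, p ≤ ∫ y in Ioo s t, mcdf μ y :=
        setIntegral_mono_on (integrableOn_const measure_Ioo_lt_top.ne)
          ((mcdf_integrableOn μ hint t).mono_set Ioo_subset_Iio_self) measurableSet_Ioo
          (fun y hy => var_upper p hp μ hy.1)
      have hconst : ∫ _ in Ioo s t, p = p * t - p * s := by
        rw [setIntegral_const, smul_eq_mul, Real.volume_real_Ioo, max_eq_left (by linarith)]
        ring
      linarith
    linarith

/-- If `F_{μ₁}(r) ≥ F_{μ₂}(r)` for all `r ≤ VaR_p(μ₁)`, then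
`CVaR_p(μ₁) ≤ CVaR_p(μ₂)`. -/
theorem cvar_mono_of_cdf_ge_up_to_var
    (p : ℝ) (hp : p ∈ Set.Ioo (0 : ℝ) 1)
    (μ₁ μ₂ : Measure ℝ) [IsProbabilityMeasure μ₁] [IsProbabilityMeasure μ₂]
    (hint₁ : Integrable (fun x : ℝ => x) μ₁)
    (hint₂ : Integrable (fun x : ℝ => x) μ₂)
    (hF : ∀ r : ℝ, r ≤ valueAtRisk p μ₁ → mcdf μ₂ r ≤ mcdf μ₁ r) :
    cvar p μ₁ ≤ cvar p μ₂ := by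
  obtain ⟨hp0, hp1⟩ := hp
  set t := valueAtRisk p μ₁ with ht
  have key₁ := cvar_repr p hp0 μ₁ hint₁
  have key₂ := cvar_repr p hp0 μ₂ hint₂
  have step1 : ∫ y in Iio t, mcdf μ₂ y ≤ ∫ y in Iio t, mcdf μ₁ y :=
    setIntegral_mono_on (mcdf_integrableOn μ₂ hint₂ t) (mcdf_integrableOn μ₁ hint₁ t)
      measurableSet_Iio (fun y hy => hF y hy.le)
  have step2 := G_le_G_var p ⟨hp0, hp1⟩ μ₂ hint₂ t
  have : p * cvar p μ₁ ≤ p * cvar p μ₂ := by rw [key₁, key₂]; linarith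
  exact le_of_mul_le_mul_left this hp0
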